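/- Let 𝔸 be a complex Banach algebra with unit and let a, b ∈ 𝔸. Define the adjoint map ad_a : 𝔸 → 𝔸 by ad_a(x) = a*x − x*a. Then the series ∑_{n=0}^∞ (1/n!) • ad_a^[n](b) (where ad_a^[n] denotes the n-fold iterate) converges and its sum equals exp(a) * b * exp(−a). (Baker–Campbell–Hausdorff conjugation formula: e^{a} b e^{−a} = b + [a,b] + ½[a,[a,b]] + ⋯.) -/

import Mathlib

open NormedSpace in
private lemma pow_mulLeft_apply {𝔸 : Type*} [NormedRing 𝔸] [NormedAlgebra ℂ 𝔸]
    (a b : 𝔸) (n : ℕ) : ((ContinuousLinearMap.mul ℂ 𝔸 a) ^ n) b = a ^ n * b := by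
  induction n with
  | zero => simp
  | succ n ih =>
    rw [pow_succ', pow_succ', ContinuousLinearMap.mul_apply, ih,
      ContinuousLinearMap.mul_apply', mul_assoc]

open NormedSpace in
private lemma pow_mulRight_apply {𝔸 : Type*} [NormedRing 𝔸] [NormedAlgebra ℂ 𝔸]
    (a b : 𝔸) (n : ℕ) : (((ContinuousLinearMap.mul ℂ 𝔸).flip a) ^ n) b = b * a ^ n := by
  induction n with
  | zero => simp
  | succ n ih =>
    rw [pow_succ', pow_succ, ContinuousLinearMap.mul_apply,
      ContinuousLinearMap.flip_apply, ContinuousLinearMap.mul_apply', ih, mul_assoc]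

open NormedSpace in
private lemma exp_mulLeft {𝔸 : Type*} [NormedRing 𝔸] [NormedAlgebra ℂ 𝔸] [CompleteSpace 𝔸]
    (a b : 𝔸) : exp (ContinuousLinearMap.mul ℂ 𝔸 a) b = exp a * b := by
  have h1 := (exp_series_hasSum_exp' (𝕂 := ℂ) (ContinuousLinearMap.mul ℂ 𝔸 a)).mapL
    (ContinuousLinearMap.apply ℂ 𝔸 b)
  have h2 := (exp_series_hasSum_exp' (𝕂 := ℂ) a).mapL
    ((ContinuousLinearMap.mul ℂ 𝔸).flip b)
  refine h1.unique (HasSum.congr_fun h2 fun n => ?_)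
  simp only [ContinuousLinearMap.apply_apply, map_smul, ContinuousLinearMap.flip_apply,
    ContinuousLinearMap.mul_apply', ContinuousLinearMap.smul_apply, pow_mulLeft_apply]

open NormedSpace in
private lemma exp_mulRight {𝔸 : Type*} [NormedRing 𝔸] [NormedAlgebra ℂ 𝔸] [CompleteSpace 𝔸]
    (a b : 𝔸) : exp ((ContinuousLinearMap.mul ℂ 𝔸).flip a) b = b * exp a := by
  have h1 := (exp_series_hasSum_exp' (𝕂 := ℂ) ((ContinuousLinearMap.mul ℂ 𝔸).flip a)).mapL
    (ContinuousLinearMap.apply ℂ 𝔸 b)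
  have h2 := (exp_series_hasSum_exp' (𝕂 := ℂ) a).mapL (ContinuousLinearMap.mul ℂ 𝔸 b)
  refine h1.unique (HasSum.congr_fun h2 fun n => ?_)
  simp only [ContinuousLinearMap.apply_apply, map_smul, ContinuousLinearMap.mul_apply',
    ContinuousLinearMap.smul_apply, pow_mulRight_apply, mul_smul_comm]

/-- Baker–Campbell–Hausdorff conjugation formula:
`exp a * b * exp (-a) = ∑ (1/n!) • ad_a^[n] b`. -/
theorem stmt_6 {𝔸 : Type*} [NormedRing 𝔸] [NormedAlgebra ℂ 𝔸] [CompleteSpace 𝔸]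
    (a b : 𝔸) :
    HasSum (fun n : ℕ => ((n.factorial : ℂ)⁻¹) • (fun x : 𝔸 => a * x - x * a)^[n] b)
      (NormedSpace.exp a * b * NormedSpace.exp (-a)) := by
  let L : 𝔸 →L[ℂ] 𝔸 := ContinuousLinearMap.mul ℂ 𝔸 a
  let R' : 𝔸 →L[ℂ] 𝔸 := (ContinuousLinearMap.mul ℂ 𝔸).flip (-a)
  have hcomm : Commute L R' := by
    ext x
    simp only [ContinuousLinearMap.mul_apply, ContinuousLinearMap.coe_mul,
      Function.comp_apply, ContinuousLinearMap.flip_apply,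
      ContinuousLinearMap.mul_apply', L, R']
    rw [mul_assoc]
  have had : ⇑(L + R') = fun x : 𝔸 => a * x - x * a := by
    funext x
    simp [L, R', mul_neg, sub_eq_add_neg]
  have key := (NormedSpace.exp_series_hasSum_exp' (𝕂 := ℂ) (L + R')).mapL
    (ContinuousLinearMap.apply ℂ 𝔸 b)
  have hval : NormedSpace.exp (L + R') b =
      NormedSpace.exp a * b * NormedSpace.exp (-a) := by
    letI : NormedAlgebra ℚ (𝔸 →L[ℂ] 𝔸) := NormedAlgebra.restrictScalars ℚ ℂ _
    rw [NormedSpace.exp_add_of_commute hcomm, ContinuousLinearMap.mul_apply,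
      exp_mulRight, exp_mulLeft, mul_assoc]
  rw [ContinuousLinearMap.apply_apply, hval] at key
  refine HasSum.congr_fun key fun n => ?_
  simp only [ContinuousLinearMap.apply_apply, map_smul, ContinuousLinearMap.smul_apply]
  congr 1
  rw [← had, ← FunLike.coe_pow_eq_iterate]
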